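/- Let (Ω, μ) be a probability measure space, p > 2, and let f, g : Ω → ℝ_{≥0} be measurable with ‖f‖_p‖g‖₂ ≤ 1 + ε and 1 ≤ ‖f‖_p‖g‖_{p/(p−1)}. Then 1 − ‖g‖₁/‖g‖₂ ≤ 1 − (1+ε)^{−p/(p−2)}. -/

import Mathlib

open MeasureTheory

/-- Pinching of the ratio `‖g‖₁/‖g‖₂` from the conditions
`‖f‖_p ‖g‖₂ ≤ 1 + ε` and `1 ≤ ‖f‖_p ‖g‖_{p/(p−1)}`. -/
theorem stmt_7 {Ω : Type*} [MeasurableSpace Ω] (μ : Measure Ω) [IsProbabilityMeasure μ]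
    (p ε : ℝ) (hp : 2 < p) (hε : 0 ≤ ε)
    (f g : Ω → ℝ) (hfm : Measurable f) (hgm : Measurable g)
    (hf0 : ∀ x, 0 ≤ f x) (hg0 : ∀ x, 0 ≤ g x)
    (hintf : Integrable (fun x => f x ^ p) μ)
    (hintg1 : Integrable g μ)
    (hintg2 : Integrable (fun x => g x ^ 2) μ)
    (hintgp : Integrable (fun x => g x ^ (p / (p - 1))) μ)
    (hyp1 : (∫ x, f x ^ p ∂μ) ^ (1 / p) * (∫ x, g x ^ 2 ∂μ) ^ ((1 : ℝ) / 2) ≤ 1 + ε)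
    (hyp2 : 1 ≤ (∫ x, f x ^ p ∂μ) ^ (1 / p) *
      (∫ x, g x ^ (p / (p - 1)) ∂μ) ^ ((p - 1) / p)) :
    1 - (∫ x, g x ∂μ) / (∫ x, g x ^ 2 ∂μ) ^ ((1 : ℝ) / 2) ≤
      1 - (1 + ε) ^ (-(p / (p - 2))) := by
  have hp2 : (0:ℝ) < p - 2 := by linarith
  have hp1 : (0:ℝ) < p - 1 := by linarith
  have hp0 : (0:ℝ) < p := by linarith
  set A : ℝ := (∫ x, f x ^ p ∂μ) ^ (1 / p) with hA
  set I1 : ℝ := ∫ x, g x ∂μ with hI1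
  set I2 : ℝ := ∫ x, g x ^ 2 ∂μ with hI2
  set Iq : ℝ := ∫ x, g x ^ (p / (p - 1)) ∂μ with hIq
  have hI1nn : 0 ≤ I1 := integral_nonneg hg0
  have hI2nn : 0 ≤ I2 := integral_nonneg (fun x => sq_nonneg _)
  have hIqnn : 0 ≤ Iq := integral_nonneg (fun x => Real.rpow_nonneg (hg0 x) _)
  have hAnn : 0 ≤ A := Real.rpow_nonneg (integral_nonneg (fun x => Real.rpow_nonneg (hf0 x) _)) _
  have hrpos : (0:ℝ) < (p - 1) / (p - 2) := div_pos hp1 hp2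
  have hconj : ((p - 1) / (p - 2)).HolderConjugate (p - 1) := by
    rw [Real.holderConjugate_iff]
    constructor
    · rw [lt_div_iff₀ hp2]; linarith
    · field_simp
      ring
  have hmeas : ∀ c : ℝ, 0 ≤ c → AEStronglyMeasurable (fun x => g x ^ c) μ := fun c hc =>
    Measurable.aestronglyMeasurable
      (by exact (Real.continuous_rpow_const hc).measurable.comp hgm)
  have hu_mem : MemLp (fun x => g x ^ ((p - 2) / (p - 1))) (ENNReal.ofReal ((p - 1) / (p - 2))) μ := by
    have hr0 : ENNReal.ofReal ((p - 1) / (p - 2)) ≠ 0 := by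
      simp only [ne_eq, ENNReal.ofReal_eq_zero, not_le]; positivity
    have hrt : ENNReal.ofReal ((p - 1) / (p - 2)) ≠ ⊤ := ENNReal.ofReal_ne_top
    refine (memLp_norm_rpow_iff (q := ENNReal.ofReal ((p - 1) / (p - 2)))
      (hmeas _ (by positivity)) hr0 hrt).mp ?_
    rw [ENNReal.div_self hr0 hrt, ENNReal.toReal_ofReal hrpos.le]
    rw [memLp_one_iff_integrable]
    apply hintg1.congr
    filter_upwards with x
    rw [Real.norm_of_nonneg (Real.rpow_nonneg (hg0 x) _), ← Real.rpow_mul (hg0 x)]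
    rw [show (p - 2) / (p - 1) * ((p - 1) / (p - 2)) = 1 by field_simp <;> first | ring | linarith, Real.rpow_one]
  have hv_mem : MemLp (fun x => g x ^ ((2:ℝ) / (p - 1))) (ENNReal.ofReal (p - 1)) μ := by
    have hr0 : ENNReal.ofReal (p - 1) ≠ 0 := by
      simp only [ne_eq, ENNReal.ofReal_eq_zero, not_le]; linarith
    have hrt : ENNReal.ofReal (p - 1) ≠ ⊤ := ENNReal.ofReal_ne_top
    refine (memLp_norm_rpow_iff (q := ENNReal.ofReal (p - 1))
      (hmeas _ (le_of_lt (div_pos two_pos hp1))) hr0 hrt).mp ?_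
    rw [ENNReal.div_self hr0 hrt, ENNReal.toReal_ofReal hp1.le]
    rw [memLp_one_iff_integrable]
    apply hintg2.congr
    filter_upwards with x
    rw [Real.norm_of_nonneg (Real.rpow_nonneg (hg0 x) _), ← Real.rpow_mul (hg0 x)]
    rw [show (2:ℝ) / (p - 1) * (p - 1) = 2 by field_simp]
    rw [show ((2:ℝ):ℝ) = ((2:ℕ):ℝ) by norm_num, Real.rpow_natCast]
  have hH := integral_mul_le_Lp_mul_Lq_of_nonneg hconj
    (f := fun x => g x ^ ((p - 2) / (p - 1))) (g := fun x => g x ^ ((2:ℝ) / (p - 1)))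
    (Filter.Eventually.of_forall fun x => Real.rpow_nonneg (hg0 x) _)
    (Filter.Eventually.of_forall fun x => Real.rpow_nonneg (hg0 x) _)
    hu_mem hv_mem
  -- rewrite the three integrals in hH
  have e1 : ∫ x, g x ^ ((p - 2) / (p - 1)) * g x ^ ((2:ℝ) / (p - 1)) ∂μ = Iq := by
    rw [hIq]
    apply integral_congr_ae
    filter_upwards with x
    rw [← Real.rpow_add' (hg0 x) (by positivity)]
    congr 1
    field_simp
    ring
  have e2 : ∫ x, (g x ^ ((p - 2) / (p - 1))) ^ ((p - 1) / (p - 2)) ∂μ = I1 := by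
    rw [hI1]
    apply integral_congr_ae
    filter_upwards with x
    rw [← Real.rpow_mul (hg0 x),
      show (p - 2) / (p - 1) * ((p - 1) / (p - 2)) = 1 by field_simp <;> first | ring | linarith, Real.rpow_one]
  have e3 : ∫ x, (g x ^ ((2:ℝ) / (p - 1))) ^ (p - 1) ∂μ = I2 := by
    rw [hI2]
    apply integral_congr_ae
    filter_upwards with x
    rw [← Real.rpow_mul (hg0 x), show (2:ℝ) / (p - 1) * (p - 1) = 2 by field_simp]
    rw [show ((2:ℝ):ℝ) = ((2:ℕ):ℝ) by norm_num, Real.rpow_natCast]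
  rw [e1, e2, e3] at hH
  -- hH : Iq ≤ I1 ^ (1 / ((p-1)/(p-2))) * I2 ^ (1 / (p-1))
  rw [show 1 / ((p - 1) / (p - 2)) = (p - 2) / (p - 1) by field_simp] at hH
  -- positivity of A, Iq, I1, I2
  have hApos : 0 < A := by
    by_contra h
    push_neg at h
    have : A = 0 := le_antisymm h hAnn
    rw [this, zero_mul] at hyp2; linarith
  have hIqpos : 0 < Iq := by
    by_contra h
    push_neg at h
    have h0 : Iq = 0 := le_antisymm h hIqnn
    rw [h0, Real.zero_rpow (by positivity), mul_zero] at hyp2; linarith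
  have hI1pos : 0 < I1 := by
    by_contra h
    push_neg at h
    have h0 : I1 = 0 := le_antisymm h hI1nn
    rw [h0, Real.zero_rpow (by positivity), zero_mul] at hH; linarith
  have hI2pos : 0 < I2 := by
    by_contra h
    push_neg at h
    have h0 : I2 = 0 := le_antisymm h hI2nn
    rw [h0, Real.zero_rpow (by positivity), mul_zero] at hH; linarith
  set B : ℝ := I2 ^ ((1:ℝ)/2) with hB
  have hBpos : 0 < B := Real.rpow_pos_of_pos hI2pos _
  -- main chain : 1 ≤ (1+ε) * (I1 / B) ^ ((p-2)/p)
  have key : 1 ≤ (1 + ε) * (I1 / B) ^ ((p - 2) / p) := by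
    have step1 : 1 ≤ A * (I1 ^ ((p - 2) / (p - 1)) * I2 ^ (1 / (p - 1))) ^ ((p - 1) / p) := by
      refine hyp2.trans (mul_le_mul_of_nonneg_left ?_ hAnn)
      exact Real.rpow_le_rpow hIqnn hH (by positivity)
    have expand : (I1 ^ ((p - 2) / (p - 1)) * I2 ^ (1 / (p - 1))) ^ ((p - 1) / p)
        = I1 ^ ((p - 2) / p) * I2 ^ (1 / p) := by
      rw [Real.mul_rpow (by positivity) (by positivity),
        ← Real.rpow_mul hI1nn, ← Real.rpow_mul hI2nn]
      congr 1 <;> congr 1 <;> field_simp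
    rw [expand] at step1
    have hAle : A ≤ (1 + ε) / B := by
      rw [le_div_iff₀ hBpos]; exact hyp1
    have step2 : 1 ≤ (1 + ε) / B * (I1 ^ ((p - 2) / p) * I2 ^ (1 / p)) := by
      refine step1.trans (mul_le_mul_of_nonneg_right hAle (by positivity))
    have hBc : B ^ ((p - 2) / p) * I2 ^ ((1:ℝ) / p) = B := by
      have hI2p : I2 ^ ((1:ℝ) / p) = B ^ ((2:ℝ) / p) := by
        rw [hB, ← Real.rpow_mul hI2nn]
        congr 1
        field_simp
      rw [hI2p, ← Real.rpow_add hBpos, show (p - 2) / p + 2 / p = 1 by field_simp; ring,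
        Real.rpow_one]
    calc (1:ℝ) ≤ (1 + ε) / B * (I1 ^ ((p - 2) / p) * I2 ^ (1 / p)) := step2
      _ = (1 + ε) * (I1 / B) ^ ((p - 2) / p) := by
        rw [Real.div_rpow hI1nn hBpos.le,
          show I2 ^ ((1:ℝ)/p) = B / B ^ ((p - 2)/p) from by
            rw [eq_div_iff (Real.rpow_pos_of_pos hBpos _).ne', mul_comm]; exact hBc]
        field_simp
  -- finish
  have hineq : (1 + ε) ^ (-(p / (p - 2))) ≤ I1 / B := by
    have h1ε : (0:ℝ) < 1 + ε := by linarith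
    have hx : (1 + ε)⁻¹ ≤ (I1 / B) ^ ((p - 2) / p) := by
      rw [inv_eq_one_div, div_le_iff₀ h1ε, mul_comm]
      exact key
    have := Real.rpow_le_rpow (by positivity) hx (le_of_lt (div_pos hp0 hp2))
    rw [← Real.rpow_mul (by positivity),
      show (p - 2) / p * (p / (p - 2)) = 1 by field_simp, Real.rpow_one] at this
    calc (1 + ε) ^ (-(p / (p - 2))) = ((1 + ε)⁻¹) ^ (p / (p - 2)) := by
          rw [Real.rpow_neg h1ε.le, Real.inv_rpow h1ε.le]
      _ ≤ I1 / B := this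
  linarith
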